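/- Existence of an enumerative lossless code matching the conditional empirical entropy: fix a finite alphabet A and an integer k ≥ 0. For every ε > 0 there exists N such that for every n ≥ N (with n > k) there is a function l_n : Aⁿ → ℕ satisfying Kraft's inequality Σ_{y∈Aⁿ} 2^{−l_n(y)} ≤ 1 and l_n(y) ≤ n(H_k(y) + ε) for every y ∈ Aⁿ. -/
import Mathlib


/-- The `(k+1)`-th order empirical count `m_{a,b}(y)`: the fraction of positions
`i` of `y` (indices extended cyclically) whose preceding `k`-context is `b` and
whose symbol is `a`. -/
noncomputable def empCount {A : Type*} [Fintype A] [DecidableEq A] (n k : ℕ)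
    (y : Fin n → A) (a : A) (b : Fin k → A) : ℝ :=
  ((Finset.univ.filter fun i : Fin n =>
      y i = a ∧ ∀ j : Fin k,
        y ⟨(i.val + (n - (k - j.val) % n)) % n, Nat.mod_lt _ i.pos⟩ = b j).card : ℝ) / n

/-- The conditional empirical entropy `H_k(y)` of order `k` (base-2 logarithms,
with the convention `0·log 0 = 0`): the conditional Shannon entropy
`H(Y_{k+1} | Y_1,…,Y_k)` of a random vector distributed according to the
empirical counts of `y`. -/
noncomputable def condEmpEntropy {A : Type*} [Fintype A] [DecidableEq A]
    (n k : ℕ) (y : Fin n → A) : ℝ :=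
  -∑ b : Fin k → A, ∑ a : A,
      empCount n k y a b *
        Real.logb 2 (empCount n k y a b / ∑ a' : A, empCount n k y a' b)

-- Auxiliary machinery
section Aux

open Finset Real

variable {A : Type*} [Fintype A] [DecidableEq A]

lemma snoc_eval {N : ℕ} (y' : Fin N → A) (a : A) (v : ℕ) (h : v < N) (h2 : v < N + 1) :
    Fin.snoc (α := fun _ => A) y' a (⟨v, h2⟩ : Fin (N + 1)) = y' ⟨v, h⟩ := by
  have hE : (⟨v, h2⟩ : Fin (N + 1)) = Fin.castSucc ⟨v, h⟩ := rfl
  rw [hE, Fin.snoc_castSucc]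

lemma snoc_last' {N : ℕ} (y' : Fin N → A) (a : A) (h2 : N < N + 1) :
    Fin.snoc (α := fun _ => A) y' a (⟨N, h2⟩ : Fin (N + 1)) = a := by
  have hE : (⟨N, h2⟩ : Fin (N + 1)) = Fin.last N := rfl
  rw [hE, Fin.snoc_last]

lemma tele_sum (k : ℕ) (p : A → (Fin k → A) → ℝ) (hp0 : ∀ a b, 0 ≤ p a b)
    (hp1 : ∀ b, ∑ a, p a b ≤ 1) (m : ℕ) :
    ∑ y : Fin (k + m) → A, ∏ t : Fin m,
      p (y ⟨k + t.val, by have := t.isLt; omega⟩)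
        (fun j => y ⟨t.val + j.val, by have := t.isLt; have := j.isLt; omega⟩)
      ≤ (Fintype.card A : ℝ) ^ k := by
  induction m with
  | zero => simp [Fintype.card_fun]
  | succ m ih =>
      let e : A × (Fin (k + m) → A) ≃ (Fin (k + m + 1) → A) :=
        Fin.snocEquiv (fun _ => A)
      show (∑ y : Fin (k + m + 1) → A, ∏ t : Fin (m + 1),
          p (y ⟨k + t.val, by have := t.isLt; omega⟩)
            (fun j => y ⟨t.val + j.val, by have := t.isLt; have := j.isLt; omega⟩))
          ≤ (Fintype.card A : ℝ) ^ k
      rw [← Equiv.sum_comp e (fun y : Fin (k + m + 1) → A => ∏ t : Fin (m + 1),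
          p (y ⟨k + t.val, by have := t.isLt; omega⟩)
            (fun j => y ⟨t.val + j.val, by have := t.isLt; have := j.isLt; omega⟩))]
      rw [Fintype.sum_prod_type]
      have key : ∀ (a : A) (y' : Fin (k + m) → A),
          (∏ t : Fin (m + 1),
            p (e (a, y') ⟨k + t.val, by have := t.isLt; omega⟩)
              (fun j => e (a, y') ⟨t.val + j.val, by have := t.isLt; have := j.isLt; omega⟩))
          = (∏ t : Fin m,
              p (y' ⟨k + t.val, by have := t.isLt; omega⟩)
                (fun j => y' ⟨t.val + j.val, by have := t.isLt; have := j.isLt; omega⟩))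
            * p a (fun j => y' ⟨m + j.val, by have := j.isLt; omega⟩) := by
        intro a y'
        have he : ∀ (z : A × (Fin (k + m) → A)) (i : Fin (k + m + 1)),
            e z i = Fin.snoc (α := fun _ => A) z.2 z.1 i := fun z i => rfl
        rw [Fin.prod_univ_castSucc]
        simp only [he, Fin.coe_castSucc, Fin.val_last]
        congr 1
        · apply Finset.prod_congr rfl
          intro t _
          have h1 : k + t.val < k + m := by have := t.isLt; omega
          rw [snoc_eval y' a _ h1]
          congr 1
          funext j
          have h2 : t.val + j.val < k + m := by
            have := t.isLt; have := j.isLt; omega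
          rw [snoc_eval y' a _ h2]
        · rw [snoc_last' y' a]
          congr 1
          funext j
          have h2 : m + j.val < k + m := by have := j.isLt; omega
          rw [snoc_eval y' a _ h2]
      calc ∑ a : A, ∑ y' : Fin (k + m) → A, _ 
          = ∑ y' : Fin (k + m) → A, (∏ t : Fin m,
              p (y' ⟨k + t.val, by have := t.isLt; omega⟩)
                (fun j => y' ⟨t.val + j.val, by have := t.isLt; have := j.isLt; omega⟩))
            * ∑ a : A, p a (fun j => y' ⟨m + j.val, by have := j.isLt; omega⟩) := by
            rw [Finset.sum_comm]
            apply Finset.sum_congr rfl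
            intro y' _
            rw [Finset.mul_sum]
            apply Finset.sum_congr rfl
            intro a _
            rw [key a y']
        _ ≤ ∑ y' : Fin (k + m) → A, (∏ t : Fin m,
              p (y' ⟨k + t.val, by have := t.isLt; omega⟩)
                (fun j => y' ⟨t.val + j.val, by have := t.isLt; have := j.isLt; omega⟩)) := by
            apply Finset.sum_le_sum
            intro y' _
            have hnn : (0:ℝ) ≤ ∏ t : Fin m,
              p (y' ⟨k + t.val, by have := t.isLt; omega⟩)
                (fun j => y' ⟨t.val + j.val, by have := t.isLt; have := j.isLt; omega⟩) :=
              Finset.prod_nonneg fun t _ => hp0 _ _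
            calc _ ≤ _ * 1 := mul_le_mul_of_nonneg_left (hp1 _) hnn
              _ = _ := mul_one _
        _ ≤ (Fintype.card A : ℝ) ^ k := ih

def cnt (n k : ℕ) (y : Fin n → A) (a : A) (b : Fin k → A) : ℕ :=
  (Finset.univ.filter fun i : Fin n =>
      y i = a ∧ ∀ j : Fin k,
        y ⟨(i.val + (n - (k - j.val) % n)) % n, Nat.mod_lt _ i.pos⟩ = b j).card

def ctxf (n k : ℕ) (y : Fin n → A) (i : Fin n) : Fin k → A :=
  fun j => y ⟨(i.val + (n - (k - j.val) % n)) % n, Nat.mod_lt _ i.pos⟩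

lemma cnt_card (n k : ℕ) (y : Fin n → A) (a : A) (b : Fin k → A) :
    cnt n k y a b
      = (Finset.univ.filter fun i : Fin n => (y i, ctxf n k y i) = (a, b)).card := by
  unfold cnt
  congr 1
  ext i
  simp [ctxf, Prod.ext_iff, funext_iff]

lemma idx_eq (n k t j : ℕ) (hk : k < n) (ht : t < n - k) (hj : j < k) :
    ((k + t) + (n - (k - j) % n)) % n = t + j := by
  have h1 : (k - j) % n = k - j := Nat.mod_eq_of_lt (by omega)
  rw [h1]
  have h2 : k + t + (n - (k - j)) = n + (t + j) := by omega
  rw [h2, Nat.add_mod_left, Nat.mod_eq_of_lt (by omega)]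

lemma ctxf_shift (n k : ℕ) (hk : k < n) (y : Fin n → A) (t : ℕ) (ht : t < n - k)
    (h : k + t < n) :
    ctxf n k y ⟨k + t, h⟩ = fun j : Fin k => y ⟨t + j.val, by have := j.isLt; omega⟩ := by
  funext j
  unfold ctxf
  congr 1
  exact Fin.ext (idx_eq n k t j.val hk ht j.isLt)

lemma Q_le (n k : ℕ) (hk : k < n) (p : A → (Fin k → A) → ℝ)
    (hp0 : ∀ a b, 0 ≤ p a b) (hp1 : ∀ a b, p a b ≤ 1) (y : Fin n → A) :
    ∏ i : Fin n, p (y i) (ctxf n k y i)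
      ≤ ∏ t : Fin (n - k),
          p (y ⟨k + t.val, by have := t.isLt; omega⟩)
            (fun j => y ⟨t.val + j.val, by have := t.isLt; have := j.isLt; omega⟩) := by
  classical
  set g : Fin (n - k) → Fin n := fun t => ⟨k + t.val, by have := t.isLt; omega⟩ with hg
  have hginj : Function.Injective g := by
    intro s t hst
    have : k + s.val = k + t.val := congrArg Fin.val hst
    exact Fin.ext (by omega)
  set s : Finset (Fin n) := Finset.univ.image g with hs
  have hsplit : (∏ i ∈ s, p (y i) (ctxf n k y i)) * ∏ i ∈ sᶜ, p (y i) (ctxf n k y i)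
      = ∏ i : Fin n, p (y i) (ctxf n k y i) := Finset.prod_mul_prod_compl s _
  have h1 : ∏ i : Fin n, p (y i) (ctxf n k y i) ≤ ∏ i ∈ s, p (y i) (ctxf n k y i) := by
    rw [← hsplit]
    have hc : ∏ i ∈ sᶜ, p (y i) (ctxf n k y i) ≤ 1 :=
      Finset.prod_le_one (fun i _ => hp0 _ _) (fun i _ => hp1 _ _)
    have hnn : (0:ℝ) ≤ ∏ i ∈ s, p (y i) (ctxf n k y i) :=
      Finset.prod_nonneg fun i _ => hp0 _ _
    calc (∏ i ∈ s, p (y i) (ctxf n k y i)) * ∏ i ∈ sᶜ, p (y i) (ctxf n k y i)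
        ≤ (∏ i ∈ s, p (y i) (ctxf n k y i)) * 1 := mul_le_mul_of_nonneg_left hc hnn
      _ = _ := mul_one _
  refine h1.trans_eq ?_
  rw [hs, Finset.prod_image (fun a _ b _ h => hginj h)]
  apply Finset.prod_congr rfl
  intro t _
  rw [hg]
  congr 1
  exact ctxf_shift n k hk y t.val t.isLt _

lemma prod_fiber (n k : ℕ) (p : A → (Fin k → A) → ℝ) (y : Fin n → A) :
    ∏ i : Fin n, p (y i) (ctxf n k y i)
      = ∏ b : Fin k → A, ∏ a : A, p a b ^ (cnt n k y a b) := by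
  classical
  have h := Finset.prod_comp (s := (Finset.univ : Finset (Fin n)))
      (fun v : A × (Fin k → A) => p v.1 v.2)
      (fun i : Fin n => (y i, ctxf n k y i))
  rw [show (∏ i : Fin n, p (y i) (ctxf n k y i))
      = ∏ i : Fin n, (fun v : A × (Fin k → A) => p v.1 v.2) (y i, ctxf n k y i) from rfl, h]
  have hsub : (Finset.univ.image fun i : Fin n => (y i, ctxf n k y i))
      ⊆ (Finset.univ : Finset (A × (Fin k → A))) := Finset.subset_univ _
  rw [Finset.prod_subset hsub (by
    intro v _ hv
    have : (Finset.univ.filter fun i : Fin n => (y i, ctxf n k y i) = v) = ∅ := by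
      apply Finset.filter_eq_empty_iff.2
      intro i _
      intro hiv
      exact hv (Finset.mem_image.2 ⟨i, Finset.mem_univ i, hiv⟩)
    rw [this]
    simp)]
  rw [Fintype.prod_prod_type]
  rw [Finset.prod_comm]
  apply Finset.prod_congr rfl
  intro b _
  apply Finset.prod_congr rfl
  intro a _
  rw [cnt_card]

lemma empCount_eq_cnt (n k : ℕ) (y : Fin n → A) (a : A) (b : Fin k → A) :
    empCount n k y a b = (cnt n k y a b : ℝ) / n := rfl

noncomputable def pY (n k : ℕ) (y : Fin n → A) (a : A) (b : Fin k → A) : ℝ :=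
  (cnt n k y a b : ℝ) / ∑ a' : A, (cnt n k y a' b : ℝ)

lemma pY_nonneg (n k : ℕ) (y : Fin n → A) (a : A) (b : Fin k → A) : 0 ≤ pY n k y a b :=
  div_nonneg (Nat.cast_nonneg _) (Finset.sum_nonneg fun _ _ => Nat.cast_nonneg _)

lemma cnt_le_sum (n k : ℕ) (y : Fin n → A) (a : A) (b : Fin k → A) :
    (cnt n k y a b : ℝ) ≤ ∑ a' : A, (cnt n k y a' b : ℝ) :=
  Finset.single_le_sum (f := fun a' => (cnt n k y a' b : ℝ))
    (fun _ _ => Nat.cast_nonneg _) (Finset.mem_univ a)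

lemma pY_le_one (n k : ℕ) (y : Fin n → A) (a : A) (b : Fin k → A) : pY n k y a b ≤ 1 :=
  div_le_one_of_le₀ (cnt_le_sum n k y a b)
    (Finset.sum_nonneg fun _ _ => Nat.cast_nonneg _)

lemma pY_sum_le_one (n k : ℕ) (y : Fin n → A) (b : Fin k → A) :
    ∑ a : A, pY n k y a b ≤ 1 := by
  by_cases hS : (∑ a' : A, (cnt n k y a' b : ℝ)) = 0
  · unfold pY
    rw [hS]
    simp
  · unfold pY
    rw [← Finset.sum_div, div_self hS]

lemma pY_pos (n k : ℕ) (y : Fin n → A) (a : A) (b : Fin k → A)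
    (h : 0 < cnt n k y a b) : 0 < pY n k y a b := by
  apply div_pos (by exact_mod_cast h)
  exact lt_of_lt_of_le (by exact_mod_cast h) (cnt_le_sum n k y a b)

lemma ratio_eq (n k : ℕ) (hn : 0 < n) (y : Fin n → A) (a : A) (b : Fin k → A) :
    empCount n k y a b / ∑ a' : A, empCount n k y a' b = pY n k y a b := by
  have hn' : (n:ℝ) ≠ 0 := Nat.cast_ne_zero.2 hn.ne'
  simp only [empCount_eq_cnt, pY]
  rw [← Finset.sum_div]
  by_cases hS : (∑ a' : A, (cnt n k y a' b : ℝ)) = 0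
  · rw [hS]; simp
  · field_simp

lemma entropy_nonneg (n k : ℕ) (y : Fin n → A) : 0 ≤ condEmpEntropy n k y := by
  unfold condEmpEntropy
  rw [neg_nonneg]
  apply Finset.sum_nonpos
  intro b _
  apply Finset.sum_nonpos
  intro a _
  apply mul_nonpos_of_nonneg_of_nonpos
  · exact div_nonneg (Nat.cast_nonneg _) (Nat.cast_nonneg _)
  · apply Real.logb_nonpos (by norm_num)
    · exact div_nonneg (div_nonneg (Nat.cast_nonneg _) (Nat.cast_nonneg _))
        (Finset.sum_nonneg fun _ _ => div_nonneg (Nat.cast_nonneg _) (Nat.cast_nonneg _))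
    · exact div_le_one_of_le₀
        (Finset.single_le_sum (f := fun a' => empCount n k y a' b)
          (fun _ _ => div_nonneg (Nat.cast_nonneg _) (Nat.cast_nonneg _)) (Finset.mem_univ a))
        (Finset.sum_nonneg fun _ _ => div_nonneg (Nat.cast_nonneg _) (Nat.cast_nonneg _))

lemma rpow_neg_entropy (n k : ℕ) (hn : 0 < n) (y : Fin n → A) :
    (2:ℝ) ^ (-((n:ℝ) * condEmpEntropy n k y))
      = ∏ b : Fin k → A, ∏ a : A, pY n k y a b ^ (cnt n k y a b) := by
  have hn' : (n:ℝ) ≠ 0 := Nat.cast_ne_zero.2 hn.ne'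
  have hH : (n:ℝ) * condEmpEntropy n k y
      = -∑ b : Fin k → A, ∑ a : A, (cnt n k y a b : ℝ) * Real.logb 2 (pY n k y a b) := by
    unfold condEmpEntropy
    rw [mul_neg, neg_inj, Finset.mul_sum]
    apply Finset.sum_congr rfl
    intro b _
    rw [Finset.mul_sum]
    apply Finset.sum_congr rfl
    intro a _
    rw [ratio_eq n k hn, empCount_eq_cnt, ← mul_assoc, mul_div_cancel₀ _ hn']
  rw [hH, neg_neg]
  rw [Real.rpow_def_of_pos (by norm_num : (0:ℝ) < 2)]
  rw [Finset.mul_sum, Real.exp_sum]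
  apply Finset.prod_congr rfl
  intro b _
  rw [Finset.mul_sum, Real.exp_sum]
  apply Finset.prod_congr rfl
  intro a _
  rcases Nat.eq_zero_or_pos (cnt n k y a b) with h0 | hpos
  · rw [h0]; simp
  · have hq : 0 < pY n k y a b := pY_pos n k y a b hpos
    have h2 : Real.log 2 ≠ 0 := by
      have := Real.log_pos (by norm_num : (1:ℝ) < 2); linarith
    rw [Real.logb]
    have harg : Real.log 2 * ((cnt n k y a b : ℝ) * (Real.log (pY n k y a b) / Real.log 2))
        = (cnt n k y a b : ℝ) * Real.log (pY n k y a b) := by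
      field_simp
    rw [harg, Real.exp_nat_mul, Real.exp_log hq]

lemma sum_Q_le (n k : ℕ) (hk : k < n) (p : A → (Fin k → A) → ℝ)
    (hp0 : ∀ a b, 0 ≤ p a b) (hp1 : ∀ a b, p a b ≤ 1) (hps : ∀ b, ∑ a, p a b ≤ 1) :
    ∑ y : Fin n → A, ∏ i : Fin n, p (y i) (ctxf n k y i)
      ≤ (Fintype.card A : ℝ) ^ k := by
  have h : k + (n - k) = n := by omega
  calc ∑ y : Fin n → A, ∏ i : Fin n, p (y i) (ctxf n k y i)
      ≤ ∑ y : Fin n → A, ∏ t : Fin (n - k),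
          p (y ⟨k + t.val, by have := t.isLt; omega⟩)
            (fun j => y ⟨t.val + j.val, by have := t.isLt; have := j.isLt; omega⟩) :=
        Finset.sum_le_sum fun y _ => Q_le n k hk p hp0 hp1 y
    _ ≤ (Fintype.card A : ℝ) ^ k := by
        rw [← Equiv.sum_comp (Equiv.arrowCongr (finCongr h) (Equiv.refl A))
          (fun y : Fin n → A => ∏ t : Fin (n - k),
            p (y ⟨k + t.val, by have := t.isLt; omega⟩)
              (fun j => y ⟨t.val + j.val, by have := t.isLt; have := j.isLt; omega⟩))]
        exact tele_sum k p hp0 hps (n - k)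

lemma entropy_congr (n k : ℕ) (y y' : Fin n → A)
    (h : ∀ a b, cnt n k y' a b = cnt n k y a b) :
    condEmpEntropy n k y' = condEmpEntropy n k y := by
  have hE : ∀ a b, empCount n k y' a b = empCount n k y a b := by
    intro a b; rw [empCount_eq_cnt, empCount_eq_cnt, h]
  unfold condEmpEntropy
  simp only [hE]

lemma cnt_le (n k : ℕ) (y : Fin n → A) (a : A) (b : Fin k → A) : cnt n k y a b ≤ n := by
  unfold cnt
  exact le_trans (Finset.card_filter_le _ _) (by simp)

lemma kraft_core (n k : ℕ) (hk : k < n) :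
    ∑ y : Fin n → A, (2:ℝ) ^ (-((n:ℝ) * condEmpEntropy n k y))
      ≤ (Fintype.card (A → (Fin k → A) → Fin (n+1)) : ℝ) * (Fintype.card A : ℝ) ^ k := by
  classical
  have hn : 0 < n := by omega
  set φ : (Fin n → A) → (A → (Fin k → A) → ℕ) := fun y a b => cnt n k y a b with hφ
  rw [← Finset.sum_fiberwise_of_maps_to (g := φ) (t := Finset.univ.image φ)
    (fun y _ => Finset.mem_image_of_mem φ (Finset.mem_univ y))
    (fun y => (2:ℝ) ^ (-((n:ℝ) * condEmpEntropy n k y)))]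
  have inner : ∀ v ∈ Finset.univ.image φ,
      ∑ y ∈ Finset.univ.filter (fun y : Fin n → A => φ y = v),
        (2:ℝ) ^ (-((n:ℝ) * condEmpEntropy n k y)) ≤ (Fintype.card A : ℝ) ^ k := by
    intro v hv
    obtain ⟨y₀, -, hy₀⟩ := Finset.mem_image.1 hv
    have key : ∀ y ∈ Finset.univ.filter (fun y : Fin n → A => φ y = v),
        (2:ℝ) ^ (-((n:ℝ) * condEmpEntropy n k y))
          = ∏ i : Fin n, pY n k y₀ (y i) (ctxf n k y i) := by
      intro y hy
      have hvy : φ y = φ y₀ := by rw [hy₀, (Finset.mem_filter.1 hy).2]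
      have hcnt : ∀ a b, cnt n k y a b = cnt n k y₀ a b := by
        intro a b; exact congrFun (congrFun hvy a) b
      rw [entropy_congr n k y₀ y hcnt, rpow_neg_entropy n k hn y₀, prod_fiber n k (pY n k y₀) y]
      apply Finset.prod_congr rfl
      intro b _
      apply Finset.prod_congr rfl
      intro a _
      rw [hcnt]
    rw [Finset.sum_congr rfl key]
    calc ∑ y ∈ Finset.univ.filter (fun y : Fin n → A => φ y = v),
          ∏ i : Fin n, pY n k y₀ (y i) (ctxf n k y i)
        ≤ ∑ y : Fin n → A, ∏ i : Fin n, pY n k y₀ (y i) (ctxf n k y i) :=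
          Finset.sum_le_sum_of_subset_of_nonneg (Finset.filter_subset _ _)
            (fun y _ _ => Finset.prod_nonneg fun i _ => pY_nonneg _ _ _ _ _)
      _ ≤ (Fintype.card A : ℝ) ^ k :=
          sum_Q_le n k hk (pY n k y₀) (pY_nonneg n k y₀) (pY_le_one n k y₀)
            (pY_sum_le_one n k y₀)
  calc ∑ v ∈ Finset.univ.image φ, ∑ y ∈ Finset.univ.filter (fun y : Fin n → A => φ y = v),
        (2:ℝ) ^ (-((n:ℝ) * condEmpEntropy n k y))
      ≤ ∑ _v ∈ Finset.univ.image φ, (Fintype.card A : ℝ) ^ k := Finset.sum_le_sum inner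
    _ = ((Finset.univ.image φ).card : ℝ) * (Fintype.card A : ℝ) ^ k := by
        rw [Finset.sum_const, nsmul_eq_mul]
    _ ≤ (Fintype.card (A → (Fin k → A) → Fin (n+1)) : ℝ) * (Fintype.card A : ℝ) ^ k := by
        apply mul_le_mul_of_nonneg_right _ (by positivity)
        have hcard : (Finset.univ.image φ).card
            ≤ Fintype.card (A → (Fin k → A) → Fin (n+1)) := by
          rw [← Finset.card_univ (α := A → (Fin k → A) → Fin (n+1))]
          apply Finset.card_le_card_of_injOn
            (fun v a b => (⟨min (v a b) n, by omega⟩ : Fin (n+1)))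
            (fun _ _ => Finset.mem_univ _)
          intro v hv w hw hvw
          have hvle : ∀ a b, v a b ≤ n := by
            obtain ⟨y₁, -, h₁⟩ := Finset.mem_image.1 (Finset.mem_coe.1 hv)
            intro a b; rw [← h₁]; exact cnt_le n k y₁ a b
          have hwle : ∀ a b, w a b ≤ n := by
            obtain ⟨y₁, -, h₁⟩ := Finset.mem_image.1 (Finset.mem_coe.1 hw)
            intro a b; rw [← h₁]; exact cnt_le n k y₁ a b
          funext a b
          have := congrFun (congrFun hvw a) b
          have hval : min (v a b) n = min (w a b) n := congrArg Fin.val this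
          rw [min_eq_left (hvle a b), min_eq_left (hwle a b)] at hval
          exact hval
        exact_mod_cast hcard

lemma log_le_two_sqrt (x : ℝ) (hx : 1 ≤ x) : Real.log x ≤ 2 * Real.sqrt x := by
  have hx0 : 0 ≤ x := by linarith
  have hs : 0 < Real.sqrt x := Real.sqrt_pos.2 (by linarith)
  have h1 : Real.log (Real.sqrt x) ≤ Real.sqrt x - 1 := Real.log_le_sub_one_of_pos hs
  have h2 : Real.log x = 2 * Real.log (Real.sqrt x) := by
    rw [Real.log_sqrt hx0]; ring
  linarith

lemma growth (a b ε : ℝ) (hε : 0 < ε) :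
    ∃ N : ℕ, ∀ n : ℕ, N ≤ n → a * Real.sqrt n + b ≤ ε * n := by
  set a' := max a 0 with ha'
  set b' := max b 0 with hb'
  set s₀ := max ((a' + b' + 1) / ε) 1 with hs₀
  have hs₀1 : 1 ≤ s₀ := le_max_right _ _
  refine ⟨⌈s₀ ^ 2⌉₊, fun n hn => ?_⟩
  have hn' : s₀ ^ 2 ≤ (n : ℝ) := le_trans (Nat.le_ceil _) (by exact_mod_cast hn)
  set s := Real.sqrt n with hs
  have hsn : s ^ 2 = (n : ℝ) := Real.sq_sqrt (Nat.cast_nonneg n)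
  have hss : s₀ ≤ s := by
    have := Real.sqrt_le_sqrt hn'
    rwa [Real.sqrt_sq (by linarith : (0:ℝ) ≤ s₀)] at this
  have hs1 : 1 ≤ s := le_trans hs₀1 hss
  have ha0 : 0 ≤ a' := le_max_right _ _
  have hb0 : 0 ≤ b' := le_max_right _ _
  have key : ε * s ^ 2 ≥ a' * s + b' := by
    have h1 : ε * s₀ ≥ a' + b' + 1 := by
      have hle : (a' + b' + 1) / ε ≤ s₀ := le_max_left _ _
      calc ε * s₀ ≥ ε * ((a' + b' + 1) / ε) := by nlinarith
        _ = a' + b' + 1 := by field_simp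
    have hs0 : (0:ℝ) ≤ s := by linarith
    have e1 : (a' + b' + 1) * s ≤ (ε * s₀) * s := mul_le_mul_of_nonneg_right h1 hs0
    have e2 : (ε * s₀) * s ≤ (ε * s) * s :=
      mul_le_mul_of_nonneg_right (mul_le_mul_of_nonneg_left hss hε.le) hs0
    have e3 : (b' + 1) * 1 ≤ (b' + 1) * s := by nlinarith
    nlinarith
  have ha : a * s ≤ a' * s := by
    apply mul_le_mul_of_nonneg_right (le_max_left _ _) (by linarith)
  have hb : b ≤ b' := le_max_left _ _
  rw [← hsn]
  linarith

lemma clog_bound (CA k n : ℕ) (hCA : CA ≤ n) :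
    Nat.clog 2 ((n+1) ^ (CA^(k+1)) * CA ^ k)
      ≤ (Nat.log 2 n + 1) * (CA^(k+1) + k) := by
  set L := Nat.log 2 n + 1 with hL
  have h1 : n + 1 ≤ 2 ^ L := Nat.lt_pow_succ_log_self (by norm_num) n
  have h2 : CA ≤ 2 ^ L := le_trans hCA (by omega)
  calc Nat.clog 2 ((n+1) ^ (CA^(k+1)) * CA ^ k)
      ≤ Nat.clog 2 ((2^L) ^ (CA^(k+1)) * (2^L) ^ k) :=
        Nat.clog_mono_right 2
          (Nat.mul_le_mul (Nat.pow_le_pow_left h1 _) (Nat.pow_le_pow_left h2 _))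
    _ = L * (CA^(k+1) + k) := by
        rw [← pow_mul, ← pow_mul, ← pow_add, Nat.clog_pow _ _ (by norm_num), ← Nat.mul_add]

end Aux

/-- Existence of an enumerative lossless code essentially matching the
conditional empirical entropy: for every `ε > 0` there is `N` such that for all
`n ≥ N` (with `n > k`) there is a length function `l_n : Aⁿ → ℕ` satisfying
Kraft's inequality and `l_n(y) ≤ n(H_k(y) + ε)` for every `y`. -/
theorem exists_code_matching_condEmpEntropy {A : Type*} [Fintype A] [DecidableEq A]
    (k : ℕ) (ε : ℝ) (hε : 0 < ε) :
    ∃ N : ℕ, ∀ n : ℕ, N ≤ n → k < n →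
      ∃ l : (Fin n → A) → ℕ,
        (∑ y : Fin n → A, (2 : ℝ) ^ (-(l y : ℝ)) ≤ 1) ∧
        ∀ y : Fin n → A, (l y : ℝ) ≤ n * (condEmpEntropy n k y + ε) := by
  classical
  by_cases hA : Nonempty A
  swap
  · refine ⟨1, fun n hn hkn => ⟨fun _ => 0, ?_, ?_⟩⟩
    · have hAe : IsEmpty A := not_nonempty_iff.1 hA
      haveI : IsEmpty (Fin n → A) := ⟨fun y => hAe.false (y ⟨0, by omega⟩)⟩
      rw [Finset.univ_eq_empty, Finset.sum_empty]
      norm_num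
    · intro y
      have hAe : IsEmpty A := not_nonempty_iff.1 hA
      exact (hAe.false (y ⟨0, by omega⟩)).elim
  set CA := Fintype.card A with hCAdef
  have hCA : 1 ≤ CA := Fintype.card_pos
  set D := CA ^ (k+1) with hD
  have hlog2 : (0:ℝ) < Real.log 2 := Real.log_pos (by norm_num)
  obtain ⟨N₀, hN₀⟩ := growth (2 * ((D:ℝ) + k) / Real.log 2) ((D:ℝ) + k + 1) ε hε
  refine ⟨max N₀ (max CA 1), fun n hn hkn => ?_⟩
  have hn1 : 1 ≤ n := le_trans (le_trans (le_max_right _ _) (le_max_right _ _)) hn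
  have hnCA : CA ≤ n := le_trans (le_trans (le_max_left _ _) (le_max_right _ _)) hn
  set c := Nat.clog 2 ((n+1) ^ D * CA ^ k) with hc
  have hcb : (c:ℝ) + 1 ≤ ε * n := by
    have hnat : c ≤ (Nat.log 2 n + 1) * (D + k) := clog_bound CA k n hnCA
    have hL : (Nat.log 2 n : ℝ) ≤ Real.log n / Real.log 2 := by
      have h1 : ((2:ℕ):ℝ) ^ (Nat.log 2 n) ≤ (n:ℝ) := by
        exact_mod_cast Nat.pow_log_le_self 2 (by omega)
      have h2 : Real.log (((2:ℕ):ℝ) ^ (Nat.log 2 n)) ≤ Real.log n :=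
        Real.log_le_log (by positivity) h1
      rw [Real.log_pow] at h2
      rw [le_div_iff₀ hlog2]
      exact_mod_cast h2
    have hsq : Real.log n ≤ 2 * Real.sqrt n := log_le_two_sqrt n (by exact_mod_cast hn1)
    have hgrow := hN₀ n (le_trans (le_max_left _ _) hn)
    have e0 : (c:ℝ) ≤ ((Nat.log 2 n : ℝ) + 1) * ((D:ℝ) + k) := by exact_mod_cast hnat
    have hDk : (0:ℝ) ≤ (D:ℝ) + k := by positivity
    have e1 : (Nat.log 2 n : ℝ) ≤ 2 * Real.sqrt n / Real.log 2 := by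
      refine le_trans hL ?_
      gcongr
    have e2 : ((Nat.log 2 n : ℝ) + 1) * ((D:ℝ) + k)
        ≤ (2 * Real.sqrt n / Real.log 2 + 1) * ((D:ℝ) + k) := by
      apply mul_le_mul_of_nonneg_right _ hDk
      linarith
    have e3 : (2 * Real.sqrt n / Real.log 2 + 1) * ((D:ℝ) + k) + 1
        = 2 * ((D:ℝ) + k) / Real.log 2 * Real.sqrt n + ((D:ℝ) + k + 1) := by
      field_simp
      ring
    linarith
  refine ⟨fun y => ⌈(n:ℝ) * condEmpEntropy n k y⌉₊ + c, ?_, ?_⟩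
  · -- Kraft inequality
    have hterm : ∀ y : Fin n → A,
        (2:ℝ) ^ (-(((⌈(n:ℝ) * condEmpEntropy n k y⌉₊ + c : ℕ)):ℝ))
          = (2:ℝ) ^ (-((⌈(n:ℝ) * condEmpEntropy n k y⌉₊ : ℕ):ℝ)) * (2:ℝ) ^ (-(c:ℝ)) := by
      intro y
      rw [← Real.rpow_add (by norm_num : (0:ℝ) < 2)]
      push_cast
      ring_nf
    calc ∑ y : Fin n → A, (2:ℝ) ^ (-(((⌈(n:ℝ) * condEmpEntropy n k y⌉₊ + c : ℕ)):ℝ))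
        = (∑ y : Fin n → A,
            (2:ℝ) ^ (-((⌈(n:ℝ) * condEmpEntropy n k y⌉₊ : ℕ):ℝ))) * (2:ℝ) ^ (-(c:ℝ)) := by
          rw [Finset.sum_mul]
          exact Finset.sum_congr rfl fun y _ => hterm y
      _ ≤ (∑ y : Fin n → A, (2:ℝ) ^ (-((n:ℝ) * condEmpEntropy n k y))) * (2:ℝ) ^ (-(c:ℝ)) := by
          apply mul_le_mul_of_nonneg_right _ (by positivity)
          apply Finset.sum_le_sum
          intro y _
          apply Real.rpow_le_rpow_of_exponent_le (by norm_num)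
          exact neg_le_neg (Nat.le_ceil _)
      _ ≤ (((n+1) ^ D * CA ^ k : ℕ) : ℝ) * (2:ℝ) ^ (-(c:ℝ)) := by
          apply mul_le_mul_of_nonneg_right _ (by positivity)
          have hcf : (Fintype.card (A → (Fin k → A) → Fin (n+1)) : ℕ) = (n+1) ^ D := by
            rw [Fintype.card_fun, Fintype.card_fun, Fintype.card_fin, Fintype.card_fun,
              Fintype.card_fin, ← pow_mul, ← pow_succ, hD, hCAdef]
          have := kraft_core (A := A) n k hkn
          rw [hcf] at this
          refine le_trans this ?_
          push_cast
          exact le_rfl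
      _ ≤ (2:ℝ) ^ ((c:ℕ):ℝ) * (2:ℝ) ^ (-(c:ℝ)) := by
          apply mul_le_mul_of_nonneg_right _ (by positivity)
          rw [Real.rpow_natCast]
          exact_mod_cast Nat.le_pow_clog (by norm_num) _
      _ = 1 := by
          rw [← Real.rpow_add (by norm_num : (0:ℝ) < 2)]
          simp
  · intro y
    show ((⌈(n:ℝ) * condEmpEntropy n k y⌉₊ + c : ℕ) : ℝ) ≤ (n:ℝ) * (condEmpEntropy n k y + ε)
    have hH0 : 0 ≤ (n:ℝ) * condEmpEntropy n k y :=
      mul_nonneg (Nat.cast_nonneg n) (entropy_nonneg n k y)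
    have hceil : (⌈(n:ℝ) * condEmpEntropy n k y⌉₊ : ℝ) < (n:ℝ) * condEmpEntropy n k y + 1 :=
      Nat.ceil_lt_add_one hH0
    push_cast
    rw [mul_add]
    have hcomm : (n:ℝ) * ε = ε * n := mul_comm _ _
    linarith
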